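/- For every integer m ≥ 1, the polynomial x^{m+8} − x^{m+7} − x^{m+5} + x^3 + x − 1 has a unique real root β_m > 1, and the largest eigenvalue of the adjacency matrix of the tree T_{2,4,4+m} equals β_m^{1/2} + β_m^{−1/2}. -/

import Mathlib

/-- Adjacency (as a relation on natural-number labels) of the tree `T_{p+1, q+1, r+1}`
formed from three paths with `p`, `q`, `r` edges joined at the common vertex `0`:
the first arm uses vertices `1, …, p`, the second `p+1, …, p+q`,
the third `p+q+1, …, p+q+r`. -/
def armAdj (p q i j : ℕ) : Prop :=
  (i = 0 ∧ (j = 1 ∨ j = p + 1 ∨ j = p + q + 1)) ∨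
  (j = 0 ∧ (i = 1 ∨ i = p + 1 ∨ i = p + q + 1)) ∨
  (i + 1 = j ∧ i ≠ 0 ∧ j ≠ p + 1 ∧ j ≠ p + q + 1) ∨
  (j + 1 = i ∧ j ≠ 0 ∧ i ≠ p + 1 ∧ i ≠ p + q + 1)

instance (p q i j : ℕ) : Decidable (armAdj p q i j) := by
  unfold armAdj; infer_instance

/-- The real adjacency matrix of the tree `T_{p+1, q+1, r+1}` on `1 + p + q + r` vertices. -/
def treeMatrix (p q r : ℕ) : Matrix (Fin (1 + p + q + r)) (Fin (1 + p + q + r)) ℝ :=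
  Matrix.of fun i j => if armAdj p q (i : ℕ) (j : ℕ) then 1 else 0

namespace T24mAux

noncomputable def w (s : ℝ) (j : ℕ) : ℝ := s ^ j - s⁻¹ ^ j

lemma w_zero (s : ℝ) : w s 0 = 0 := by simp [w]

lemma w_rec (s : ℝ) (hs0 : s ≠ 0) (j : ℕ) :
    (s + s⁻¹) * w s (j + 1) = w s j + w s (j + 2) := by
  simp only [w, pow_succ]
  field_simp
  ring

lemma w_rec0 (s : ℝ) (hs0 : s ≠ 0) : (s + s⁻¹) * w s 1 = w s 2 := by
  have h := w_rec s hs0 0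
  rw [w_zero] at h
  simpa using h

lemma w_pos (s : ℝ) (hs : 1 < s) (j : ℕ) (hj : j ≠ 0) : 0 < w s j := by
  have h1 : 1 < s ^ j := one_lt_pow₀ hs hj
  have h2 : s⁻¹ ^ j < 1 := pow_lt_one₀ (by positivity) (inv_lt_one_of_one_lt₀ hs) hj
  simp only [w]; linarith

lemma center (s : ℝ) (hs : 1 < s) (m : ℕ)
    (hP : (s^2)^(m+8) - (s^2)^(m+7) - (s^2)^(m+5) + (s^2)^3 + s^2 - 1 = 0) :
    w s 1 * w s 4 * w s (4+m) + w s 3 * w s 2 * w s (4+m) + w s 2 * w s 4 * w s (3+m)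
      = (s + s⁻¹) * (w s 2 * w s 4 * w s (4+m)) := by
  have hs0 : s ≠ 0 := by linarith
  have h8 : (s ^ 2) ^ (m + 8) = (s ^ m) ^ 2 * s ^ 16 := by
    rw [← pow_mul, ← pow_mul, ← pow_add]; congr 1; ring
  have h7 : (s ^ 2) ^ (m + 7) = (s ^ m) ^ 2 * s ^ 14 := by
    rw [← pow_mul, ← pow_mul, ← pow_add]; congr 1; ring
  have h5 : (s ^ 2) ^ (m + 5) = (s ^ m) ^ 2 * s ^ 10 := by
    rw [← pow_mul, ← pow_mul, ← pow_add]; congr 1; ring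
  have h3 : (s ^ 2) ^ 3 = s ^ 6 := by ring
  rw [h8, h7, h5, h3] at hP
  have ha0 : s ^ m ≠ 0 := pow_ne_zero _ hs0
  simp only [w, pow_add, inv_pow]
  field_simp
  linear_combination (-s^6 + s^4 + s^2 - 1) * hP

/-- the eigenvector profile -/
noncomputable def f (s : ℝ) (m : ℕ) : ℕ → ℝ := fun n =>
  if n = 0 then w s 2 * w s 4 * w s (4+m)
  else if n = 1 then w s 1 * w s 4 * w s (4+m)
  else if n ≤ 4 then w s (5-n) * w s 2 * w s (4+m)
  else w s 2 * w s 4 * w s (8+m-n)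

lemma f_big (s : ℝ) (m n : ℕ) (hn : 5 ≤ n) :
    f s m n = w s 2 * w s 4 * w s (8+m-n) := by
  simp only [f]
  rw [if_neg (by omega), if_neg (by omega), if_neg (by omega)]

lemma f0 (s : ℝ) (m : ℕ) : f s m 0 = w s 2 * w s 4 * w s (4+m) := by simp [f]
lemma f1 (s : ℝ) (m : ℕ) : f s m 1 = w s 1 * w s 4 * w s (4+m) := by simp [f]
lemma f2 (s : ℝ) (m : ℕ) : f s m 2 = w s 3 * w s 2 * w s (4+m) := by norm_num [f]
lemma f3 (s : ℝ) (m : ℕ) : f s m 3 = w s 2 * w s 2 * w s (4+m) := by norm_num [f]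
lemma f4 (s : ℝ) (m : ℕ) : f s m 4 = w s 1 * w s 2 * w s (4+m) := by norm_num [f]
lemma f5 (s : ℝ) (m : ℕ) : f s m 5 = w s 2 * w s 4 * w s (3+m) := by
  rw [f_big s m 5 (by norm_num), show 8+m-5 = 3+m by omega]
lemma f6 (s : ℝ) (m : ℕ) : f s m 6 = w s 2 * w s 4 * w s (2+m) := by
  rw [f_big s m 6 (by norm_num), show 8+m-6 = 2+m by omega]

lemma f_pos (s : ℝ) (hs : 1 < s) (m n : ℕ) (hn : n < 8 + m) : 0 < f s m n := by
  have W := w_pos s hs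
  rcases Nat.lt_or_ge n 5 with h | h
  · interval_cases n <;>
      simp only [f0, f1, f2, f3, f4] <;>
      exact mul_pos (mul_pos (W _ (by omega)) (W _ (by omega))) (W _ (by omega))
  · rw [f_big s m n h]
    exact mul_pos (mul_pos (W _ (by omega)) (W _ (by omega))) (W _ (by omega))

/-- sum helpers -/
lemma sum_one {n : ℕ} (g : Fin n → ℝ) (P : ℕ → Prop) [DecidablePred P]
    (a : ℕ) (ha : a < n) (hP : ∀ j, j < n → (P j ↔ j = a)) :
    ∑ j : Fin n, (if P (j : ℕ) then (1:ℝ) else 0) * g j = g ⟨a, ha⟩ := by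
  rw [Finset.sum_eq_single (⟨a, ha⟩ : Fin n)]
  · simp [(hP a ha).mpr rfl]
  · intro j _ hj
    have : ¬ P (j : ℕ) := fun h => hj (Fin.ext ((hP _ j.isLt).mp h))
    simp [this]
  · simp

lemma sum_ind {n : ℕ} (g : Fin n → ℝ) (a : ℕ) (ha : a < n) :
    ∑ j : Fin n, (if (j : ℕ) = a then (1:ℝ) else 0) * g j = g ⟨a, ha⟩ :=
  sum_one g (fun j => j = a) a ha (fun _ _ => Iff.rfl)

lemma sum_two {n : ℕ} (g : Fin n → ℝ) (P : ℕ → Prop) [DecidablePred P]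
    (a b : ℕ) (ha : a < n) (hb : b < n) (hab : a ≠ b)
    (hP : ∀ j, j < n → (P j ↔ (j = a ∨ j = b))) :
    ∑ j : Fin n, (if P (j : ℕ) then (1:ℝ) else 0) * g j = g ⟨a, ha⟩ + g ⟨b, hb⟩ := by
  have step : ∀ j : Fin n, (if P (j : ℕ) then (1:ℝ) else 0) * g j
      = (if (j:ℕ) = a then (1:ℝ) else 0) * g j + (if (j:ℕ) = b then (1:ℝ) else 0) * g j := by
    intro j
    by_cases h1 : (j:ℕ) = a <;> by_cases h2 : (j:ℕ) = b
    · exact absurd (h1.symm.trans h2) hab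
    · simp [h1, h2, (hP a ha).mpr (Or.inl rfl), hab]
    · simp [h1, h2, (hP b hb).mpr (Or.inr rfl), Ne.symm hab]
    · have : ¬ P (j:ℕ) := fun h => by
        rcases (hP _ j.isLt).mp h with h' | h'
        exacts [h1 h', h2 h']
      simp [h1, h2, this]
  rw [Finset.sum_congr rfl (fun j _ => step j), Finset.sum_add_distrib,
    sum_ind g a ha, sum_ind g b hb]

lemma sum_three {n : ℕ} (g : Fin n → ℝ) (P : ℕ → Prop) [DecidablePred P]
    (a b c : ℕ) (ha : a < n) (hb : b < n) (hc : c < n)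
    (hab : a ≠ b) (hac : a ≠ c) (hbc : b ≠ c)
    (hP : ∀ j, j < n → (P j ↔ (j = a ∨ j = b ∨ j = c))) :
    ∑ j : Fin n, (if P (j : ℕ) then (1:ℝ) else 0) * g j
      = g ⟨a, ha⟩ + g ⟨b, hb⟩ + g ⟨c, hc⟩ := by
  have step : ∀ j : Fin n, (if P (j : ℕ) then (1:ℝ) else 0) * g j
      = (if (j:ℕ) = a then (1:ℝ) else 0) * g j + ((if (j:ℕ) = b then (1:ℝ) else 0) * g j
        + (if (j:ℕ) = c then (1:ℝ) else 0) * g j) := by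
    intro j
    by_cases h1 : (j:ℕ) = a <;> by_cases h2 : (j:ℕ) = b <;> by_cases h3 : (j:ℕ) = c
    · exact absurd (h1.symm.trans h2) hab
    · exact absurd (h1.symm.trans h2) hab
    · exact absurd (h1.symm.trans h3) hac
    · simp [h1, h2, h3, (hP a ha).mpr (Or.inl rfl), hab, hac]
    · exact absurd (h2.symm.trans h3) hbc
    · simp [h1, h2, h3, (hP b hb).mpr (Or.inr (Or.inl rfl)), Ne.symm hab, hbc]
    · simp [h1, h2, h3, (hP c hc).mpr (Or.inr (Or.inr rfl)), Ne.symm hac, Ne.symm hbc]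
    · have : ¬ P (j:ℕ) := fun h => by
        rcases (hP _ j.isLt).mp h with h' | h' | h'
        exacts [h1 h', h2 h', h3 h']
      simp [h1, h2, h3, this]
  rw [Finset.sum_congr rfl (fun j _ => step j), Finset.sum_add_distrib,
    Finset.sum_add_distrib, sum_ind g a ha, sum_ind g b hb, sum_ind g c hc]
  ring

lemma keyLemma (m : ℕ) (s : ℝ) (hs : 1 < s)
    (hP : (s^2)^(m+8) - (s^2)^(m+7) - (s^2)^(m+5) + (s^2)^3 + s^2 - 1 = 0) :
    IsGreatest {μ : ℝ | ∃ v : Fin (1 + 1 + 3 + (3 + m)) → ℝ, v ≠ 0 ∧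
        (treeMatrix 1 3 (3 + m)).mulVec v = μ • v} (s + s⁻¹) := by
  have hs0 : s ≠ 0 := by linarith
  have heigen : (treeMatrix 1 3 (3 + m)).mulVec (fun i : Fin (1 + 1 + 3 + (3 + m)) => f s m (i : ℕ))
      = (s + s⁻¹) • (fun i : Fin (1 + 1 + 3 + (3 + m)) => f s m (i : ℕ)) := by
    funext i
    simp only [treeMatrix, Matrix.mulVec, dotProduct, Matrix.of_apply,
      Pi.smul_apply, smul_eq_mul]
    rcases i with ⟨k, hk⟩
    simp only []
    rcases Nat.lt_or_ge k 6 with h6 | h6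
    · interval_cases k
      · rw [sum_three _ (armAdj 1 3 0) 1 2 5 (by omega) (by omega) (by omega)
          (by norm_num) (by norm_num) (by norm_num)
          (fun j hj => by unfold armAdj; omega)]
        show f s m 1 + f s m 2 + f s m 5 = (s + s⁻¹) * f s m 0
        rw [f0, f1, f2, f5]
        exact center s hs m hP
      · rw [sum_one _ (armAdj 1 3 1) 0 (by omega) (fun j hj => by unfold armAdj; omega)]
        show f s m 0 = (s + s⁻¹) * f s m 1
        rw [f0, f1]
        linear_combination (-1 : ℝ) * (w s 4 * w s (4+m)) * w_rec0 s hs0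
      · rw [sum_two _ (armAdj 1 3 2) 0 3 (by omega) (by omega) (by norm_num)
          (fun j hj => by unfold armAdj; omega)]
        show f s m 0 + f s m 3 = (s + s⁻¹) * f s m 2
        rw [f0, f2, f3]
        linear_combination (-1 : ℝ) * (w s 2 * w s (4+m)) * w_rec s hs0 2
      · rw [sum_two _ (armAdj 1 3 3) 2 4 (by omega) (by omega) (by norm_num)
          (fun j hj => by unfold armAdj; omega)]
        show f s m 2 + f s m 4 = (s + s⁻¹) * f s m 3
        rw [f2, f3, f4]
        linear_combination (-1 : ℝ) * (w s 2 * w s (4+m)) * w_rec s hs0 1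
      · rw [sum_one _ (armAdj 1 3 4) 3 (by omega) (fun j hj => by unfold armAdj; omega)]
        show f s m 3 = (s + s⁻¹) * f s m 4
        rw [f3, f4]
        linear_combination (-1 : ℝ) * (w s 2 * w s (4+m)) * w_rec0 s hs0
      · rw [sum_two _ (armAdj 1 3 5) 0 6 (by omega) (by omega) (by norm_num)
          (fun j hj => by unfold armAdj; omega)]
        show f s m 0 + f s m 6 = (s + s⁻¹) * f s m 5
        rw [f0, f5, f6, show 4+m = (2+m)+2 by omega, show 3+m = (2+m)+1 by omega]
        linear_combination (-1 : ℝ) * (w s 2 * w s 4) * w_rec s hs0 (2+m)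
    · rcases Nat.lt_or_ge k (7+m) with h7 | h7
      · rw [sum_two _ (armAdj 1 3 k) (k-1) (k+1) (by omega) (by omega) (by omega)
          (fun j hj => by unfold armAdj; omega)]
        show f s m (k-1) + f s m (k+1) = (s + s⁻¹) * f s m k
        rw [f_big s m (k-1) (by omega), f_big s m (k+1) (by omega), f_big s m k (by omega)]
        rw [show 8+m-(k-1) = (7+m-k)+2 by omega, show 8+m-(k+1) = 7+m-k by omega,
          show 8+m-k = (7+m-k)+1 by omega]
        linear_combination (-1 : ℝ) * (w s 2 * w s 4) * w_rec s hs0 (7+m-k)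
      · have hk7 : k = 7+m := by omega
        subst hk7
        rw [sum_one _ (armAdj 1 3 (7+m)) (6+m) (by omega)
          (fun j hj => by unfold armAdj; omega)]
        show f s m (6+m) = (s + s⁻¹) * f s m (7+m)
        rw [f_big s m (6+m) (by omega), f_big s m (7+m) (by omega)]
        rw [show 8+m-(6+m) = 2 by omega, show 8+m-(7+m) = 1 by omega]
        linear_combination (-1 : ℝ) * (w s 2 * w s 4) * w_rec0 s hs0
  have hv_pos : ∀ i : Fin (1 + 1 + 3 + (3 + m)), 0 < f s m (i : ℕ) := by
    intro i
    exact f_pos s hs m _ (by have := i.isLt; omega)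
  constructor
  · refine ⟨(fun i : Fin (1 + 1 + 3 + (3 + m)) => f s m (i : ℕ)), ?_, heigen⟩
    intro h0
    have h1 : f s m ((⟨0, by omega⟩ : Fin (1 + 1 + 3 + (3 + m))) : ℕ) = 0 := by
      have := congrFun h0 ⟨0, by omega⟩
      simpa using this
    exact absurd h1 (ne_of_gt (hv_pos _))
  · rintro μ ⟨u, hu0, huA⟩
    have hA_nonneg : ∀ i j, (0:ℝ) ≤ treeMatrix 1 3 (3+m) i j := by
      intro i j
      simp only [treeMatrix, Matrix.of_apply]
      split <;> norm_num
    have hA_symm : ∀ i j, treeMatrix 1 3 (3+m) i j = treeMatrix 1 3 (3+m) j i := by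
      intro i j
      have h : armAdj 1 3 (i : ℕ) (j : ℕ) ↔ armAdj 1 3 (j : ℕ) (i : ℕ) := by
        unfold armAdj; omega
      simp [treeMatrix, h]
    have hAu : ∀ i, ∑ j, treeMatrix 1 3 (3+m) i j * u j = μ * u i := by
      intro i
      have := congrFun huA i
      simpa [Matrix.mulVec, dotProduct] using this
    have hAv : ∀ i : Fin (1 + 1 + 3 + (3 + m)),
        ∑ j, treeMatrix 1 3 (3+m) i j * f s m (j : ℕ) = (s + s⁻¹) * f s m (i : ℕ) := by
      intro i
      have := congrFun heigen i
      simpa [Matrix.mulVec, dotProduct] using this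
    have habs : ∀ i, |μ| * |u i| ≤ ∑ j, treeMatrix 1 3 (3+m) i j * |u j| := by
      intro i
      calc |μ| * |u i| = |∑ j, treeMatrix 1 3 (3+m) i j * u j| := by
            rw [hAu i, abs_mul]
      _ ≤ ∑ j, |treeMatrix 1 3 (3+m) i j * u j| := Finset.abs_sum_le_sum_abs _ _
      _ = ∑ j, treeMatrix 1 3 (3+m) i j * |u j| := Finset.sum_congr rfl fun j _ => by
            rw [abs_mul, abs_of_nonneg (hA_nonneg i j)]
    have hS_pos : 0 < ∑ i : Fin (1 + 1 + 3 + (3 + m)), f s m (i : ℕ) * |u i| := by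
      obtain ⟨i0, hi0⟩ : ∃ i, u i ≠ 0 := by
        by_contra h
        push_neg at h
        exact hu0 (funext fun i => h i)
      exact Finset.sum_pos' (fun i _ => mul_nonneg (hv_pos i).le (abs_nonneg _))
        ⟨i0, Finset.mem_univ _, mul_pos (hv_pos i0) (abs_pos.mpr hi0)⟩
    have key2 : |μ| * ∑ i : Fin (1 + 1 + 3 + (3 + m)), f s m (i : ℕ) * |u i| ≤ (s + s⁻¹) * ∑ i : Fin (1 + 1 + 3 + (3 + m)), f s m (i : ℕ) * |u i| := by
      have c1 : |μ| * ∑ i : Fin (1 + 1 + 3 + (3 + m)), f s m (i : ℕ) * |u i| = ∑ i : Fin (1 + 1 + 3 + (3 + m)), f s m (i : ℕ) * (|μ| * |u i|) := by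
        rw [Finset.mul_sum]
        exact Finset.sum_congr rfl fun i _ => by ring
      have c2 : ∑ i : Fin (1 + 1 + 3 + (3 + m)), f s m (i : ℕ) * (|μ| * |u i|)
          ≤ ∑ i : Fin (1 + 1 + 3 + (3 + m)), f s m (i : ℕ) * (∑ j, treeMatrix 1 3 (3+m) i j * |u j|) :=
        Finset.sum_le_sum fun i _ => mul_le_mul_of_nonneg_left (habs i) (hv_pos i).le
      have c3 : ∑ i : Fin (1 + 1 + 3 + (3 + m)), f s m (i : ℕ) * (∑ j, treeMatrix 1 3 (3+m) i j * |u j|)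
          = ∑ j : Fin (1 + 1 + 3 + (3 + m)), ((s + s⁻¹) * f s m (j : ℕ)) * |u j| := by
        calc ∑ i : Fin (1 + 1 + 3 + (3 + m)), f s m (i : ℕ) * (∑ j, treeMatrix 1 3 (3+m) i j * |u j|)
            = ∑ i : Fin (1 + 1 + 3 + (3 + m)), ∑ j : Fin (1 + 1 + 3 + (3 + m)), f s m (i : ℕ) * (treeMatrix 1 3 (3+m) i j * |u j|) :=
              Finset.sum_congr rfl fun i _ => Finset.mul_sum _ _ _
        _ = ∑ j, ∑ i : Fin (1 + 1 + 3 + (3 + m)), f s m (i : ℕ) * (treeMatrix 1 3 (3+m) i j * |u j|) := Finset.sum_comm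
        _ = ∑ j : Fin (1 + 1 + 3 + (3 + m)), ((s + s⁻¹) * f s m (j : ℕ)) * |u j| := Finset.sum_congr rfl fun j _ => by
              rw [← hAv j, Finset.sum_mul]
              exact Finset.sum_congr rfl fun i _ => by rw [hA_symm i j]; ring
      have c4 : ∑ j : Fin (1 + 1 + 3 + (3 + m)), ((s + s⁻¹) * f s m (j : ℕ)) * |u j|
          = (s + s⁻¹) * ∑ i : Fin (1 + 1 + 3 + (3 + m)), f s m (i : ℕ) * |u i| := by
        rw [Finset.mul_sum]
        exact Finset.sum_congr rfl fun j _ => by ring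
      calc |μ| * ∑ i : Fin (1 + 1 + 3 + (3 + m)), f s m (i : ℕ) * |u i| = _ := c1
      _ ≤ _ := c2
      _ = _ := c3.trans c4
    have habs2 : |μ| ≤ s + s⁻¹ :=
      le_of_mul_le_mul_right (by simpa [mul_comm] using key2) hS_pos
    exact (le_abs_self μ).trans habs2

end T24mAux

theorem T24m_largest_eigenvalue (m : ℕ) (hm : 1 ≤ m) :
    (∃! β : ℝ, 1 < β ∧
        β^(m+8) - β^(m+7) - β^(m+5) + β^3 + β - 1 = 0) ∧
    ∀ β : ℝ, 1 < β → β^(m+8) - β^(m+7) - β^(m+5) + β^3 + β - 1 = 0 →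
      IsGreatest {μ : ℝ | ∃ v : Fin (1 + 1 + 3 + (3 + m)) → ℝ, v ≠ 0 ∧
          (treeMatrix 1 3 (3 + m)).mulVec v = μ • v}
        (Real.sqrt β + (Real.sqrt β)⁻¹) := by
  classical
  have hex : ∃ c : ℝ, 1 < c ∧ c^(m+8) - c^(m+7) - c^(m+5) + c^3 + c - 1 = 0 := by
    set Q : ℝ → ℝ := fun x => x^(m+7) - x^3 * (∑ i ∈ Finset.range (m+2), x^i) + 1 with hQ
    have hQcont : Continuous Q := by
      apply Continuous.add
      · exact (continuous_pow _).sub ((continuous_pow 3).mul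
          (continuous_finset_sum _ fun i _ => continuous_pow i))
      · exact continuous_const
    have hQ1 : Q 1 < 0 := by
      have h1 : Q 1 = 1 - (m+2 : ℝ) + 1 := by simp [hQ]
      have h2 : (1:ℝ) ≤ m := by exact_mod_cast hm
      rw [h1]; linarith
    have hQ2 : 0 < Q 2 := by
      have hg : ∑ i ∈ Finset.range (m+2), (2:ℝ)^i = 2^(m+2) - 1 := by
        have h := geom_sum_mul (2:ℝ) (m+2)
        norm_num at h
        exact h
      have h35 : (2:ℝ)^3 * 2^(m+2) = 2^(m+5) := by
        rw [← pow_add]; congr 1; omega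
      have hle : (2:ℝ)^(m+5) ≤ 2^(m+7) := pow_le_pow_right₀ (by norm_num) (by omega)
      have hQ2e : Q 2 = 2^(m+7) - 2^3 * ((2:ℝ)^(m+2) - 1) + 1 := by
        simp only [hQ]; rw [hg]
      rw [hQ2e]; linarith
    obtain ⟨c, hc_mem, hc0⟩ := intermediate_value_Ioo (by norm_num : (1:ℝ) ≤ 2)
      hQcont.continuousOn (Set.mem_Ioo.mpr ⟨hQ1, hQ2⟩)
    refine ⟨c, hc_mem.1, ?_⟩
    simp only [hQ] at hc0
    have hg : (∑ i ∈ Finset.range (m+2), c^i) * (c - 1) = c^(m+2) - 1 := geom_sum_mul c (m+2)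
    have h8 : c^(m+8) = c^(m+2) * c^6 := by rw [← pow_add]
    have h7 : c^(m+7) = c^(m+2) * c^5 := by rw [← pow_add]
    have h5 : c^(m+5) = c^(m+2) * c^3 := by rw [← pow_add]
    rw [h7] at hc0
    rw [h8, h7, h5]
    linear_combination (c - 1) * hc0 + c^3 * hg
  obtain ⟨c, hc1, hcP⟩ := hex
  have part2 : ∀ β : ℝ, 1 < β → β^(m+8) - β^(m+7) - β^(m+5) + β^3 + β - 1 = 0 →
      IsGreatest {μ : ℝ | ∃ v : Fin (1 + 1 + 3 + (3 + m)) → ℝ, v ≠ 0 ∧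
        (treeMatrix 1 3 (3 + m)).mulVec v = μ • v} (Real.sqrt β + (Real.sqrt β)⁻¹) := by
    intro β hβ hPβ
    have hβ0 : (0:ℝ) ≤ β := by linarith
    have hs : 1 < Real.sqrt β := by
      have := Real.sqrt_lt_sqrt (by norm_num) hβ
      simpa [Real.sqrt_one] using this
    have hs2 : Real.sqrt β ^ 2 = β := Real.sq_sqrt hβ0
    exact T24mAux.keyLemma m (Real.sqrt β) hs (by rw [hs2]; exact hPβ)
  refine ⟨⟨c, ⟨hc1, hcP⟩, ?_⟩, part2⟩
  rintro β ⟨hβ1, hβP⟩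
  have h1 := part2 β hβ1 hβP
  have h2 := part2 c hc1 hcP
  have heq : Real.sqrt β + (Real.sqrt β)⁻¹ = Real.sqrt c + (Real.sqrt c)⁻¹ :=
    h1.unique h2
  have hsb : 1 < Real.sqrt β := by
    have := Real.sqrt_lt_sqrt (by norm_num) hβ1
    simpa [Real.sqrt_one] using this
  have hsc : 1 < Real.sqrt c := by
    have := Real.sqrt_lt_sqrt (by norm_num) hc1
    simpa [Real.sqrt_one] using this
  have ht0 : (0:ℝ) < Real.sqrt β := by linarith
  have hu0 : (0:ℝ) < Real.sqrt c := by linarith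
  have h3 : (Real.sqrt β - Real.sqrt c) * (Real.sqrt β * Real.sqrt c - 1) = 0 := by
    have e1 : Real.sqrt β ^ 2 = β := Real.sq_sqrt (by linarith)
    have e2 : Real.sqrt c ^ 2 = c := Real.sq_sqrt (by linarith)
    field_simp at heq
    linear_combination heq
  have hteq : Real.sqrt β = Real.sqrt c := by
    rcases mul_eq_zero.mp h3 with h | h
    · linarith [sub_eq_zero.mp h]
    · nlinarith
  have hfin : Real.sqrt β ^ 2 = Real.sqrt c ^ 2 := by rw [hteq]
  rwa [Real.sq_sqrt (by linarith : (0:ℝ) ≤ β), Real.sq_sqrt (by linarith : (0:ℝ) ≤ c)] at hfin
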